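/- Let A = W·Λ·W* be an n×n real symmetric matrix with orthogonal eigenvector matrix W and diagonal Λ, and suppose 0 and 1 are not eigenvalues of A. Let x* satisfy x* = A·x* + b, define errors e_j = x_j − x* with x_{j+1} = A·x_j + b for 0 ≤ j ≤ k−1 (k ≥ m). If x_{k+1} is produced by one step of Anderson acceleration in the ℓ² norm with memory m (i.e., x_{k+1} = x_k + (I − S_k)·f_k with S_k = (D_k + X_k)(D_k*D_k)⁻¹D_k*, where D_k and X_k have columns Δf_{k−m+i} and Δx_{k−m+i}), then e_{k+1} = W·E·W*·A·e_k where E = D_μ·(I − K_H(K_H*K_H)⁻¹K_H*)·D_μ⁻¹, with D_μ = Λ(Λ − I)⁻¹, H = (Λ − I)²·Λ^{k−m}, and K_H = K_m(Λ, H·W*·e_0) the Krylov matrix with columns Λ^{j}·H·W*·e_0 for j = 0,…,m−1. -/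

import Mathlib

open Matrix

/-- One step of Anderson acceleration in the ℓ² norm after `k` Picard iterations:
`e_{k+1} = W E Wᵀ A e_k` with `E = D_μ (I - K_H (K_Hᵀ K_H)⁻¹ K_Hᵀ) D_μ⁻¹`. -/
theorem stmt3 {n m k : ℕ} (hm : 0 < m) (hmk : m ≤ k)
    (W Λ A : Matrix (Fin n) (Fin n) ℝ) (d : Fin n → ℝ)
    (hΛ : Λ = Matrix.diagonal d)
    (hW1 : Wᵀ * W = 1) (hW2 : W * Wᵀ = 1)
    (hA : A = W * Λ * Wᵀ)
    (hd0 : ∀ i, d i ≠ 0) (hd1 : ∀ i, d i ≠ 1)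
    (b xstar : Fin n → ℝ) (hfix : xstar = A.mulVec xstar + b)
    (x : ℕ → Fin n → ℝ)
    (hx : ∀ j < k, x (j + 1) = A.mulVec (x j) + b)
    (f : ℕ → Fin n → ℝ)
    (hf : ∀ j, f j = A.mulVec (x j) + b - x j)
    (Dk Xk : Matrix (Fin n) (Fin m) ℝ)
    (hDk : Dk = Matrix.of fun i (l : Fin m) => f (k - m + l + 1) i - f (k - m + l) i)
    (hXk : Xk = Matrix.of fun i (l : Fin m) => x (k - m + l + 1) i - x (k - m + l) i)
    (hDkinv : IsUnit (Dkᵀ * Dk).det)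
    (Sk : Matrix (Fin n) (Fin n) ℝ)
    (hSk : Sk = (Dk + Xk) * (Dkᵀ * Dk)⁻¹ * Dkᵀ)
    (hxk1 : x (k + 1) = x k + (1 - Sk).mulVec (f k))
    (H Dμ : Matrix (Fin n) (Fin n) ℝ)
    (hH : H = (Λ - 1) ^ 2 * Λ ^ (k - m))
    (hDμ : Dμ = Λ * (Λ - 1)⁻¹)
    (KH : Matrix (Fin n) (Fin m) ℝ)
    (hKH : KH = Matrix.of fun i (j : Fin m) =>
      (Λ ^ (j : ℕ)).mulVec (H.mulVec (Wᵀ.mulVec (x 0 - xstar))) i)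
    (E : Matrix (Fin n) (Fin n) ℝ)
    (hE : E = Dμ * (1 - KH * (KHᵀ * KH)⁻¹ * KHᵀ) * Dμ⁻¹) :
    x (k + 1) - xstar = (W * E * Wᵀ * A).mulVec (x k - xstar) := by
  -- conjugation basics
  have hWA : Wᵀ * A = Λ * Wᵀ := by
    rw [hA, ← mul_assoc, ← mul_assoc, hW1, one_mul]
  have hWpow : ∀ p : ℕ, Wᵀ * A ^ p = Λ ^ p * Wᵀ := by
    intro p; induction p with
    | zero => simp
    | succ p ih => rw [pow_succ, pow_succ, ← mul_assoc, ih, mul_assoc, hWA, ← mul_assoc]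
  have hWB : Wᵀ * (A - 1) = (Λ - 1) * Wᵀ := by
    rw [mul_sub, sub_mul, hWA, mul_one, one_mul]
  have hWB2 : Wᵀ * (A - 1) ^ 2 = (Λ - 1) ^ 2 * Wᵀ := by
    rw [sq, sq, ← mul_assoc, hWB, mul_assoc, hWB, mul_assoc]
  -- determinants
  have hΛ1 : Λ - 1 = Matrix.diagonal (fun i => d i - 1) := by
    rw [hΛ, ← Matrix.diagonal_one, Matrix.diagonal_sub]
  have hdet1 : IsUnit (Λ - 1).det := by
    rw [hΛ1, Matrix.det_diagonal, isUnit_iff_ne_zero]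
    exact Finset.prod_ne_zero_iff.mpr fun i _ => sub_ne_zero.mpr (hd1 i)
  have hdetΛ : IsUnit Λ.det := by
    rw [hΛ, Matrix.det_diagonal, isUnit_iff_ne_zero]
    exact Finset.prod_ne_zero_iff.mpr fun i _ => hd0 i
  have hdetW : W.det * Wᵀ.det = 1 := by
    have := congrArg Matrix.det hW2
    rwa [Matrix.det_mul, Matrix.det_one] at this
  have hA1eq : A - 1 = W * (Λ - 1) * Wᵀ := by
    rw [mul_sub, sub_mul, mul_one, hW2, hA]
  have hdetA1 : IsUnit (A - 1).det := by
    rw [hA1eq, Matrix.det_mul, Matrix.det_mul]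
    exact ((IsUnit.of_mul_eq_one _ hdetW).mul hdet1).mul
      (IsUnit.of_mul_eq_one _ (by rwa [mul_comm] at hdetW))
  have hdetDμ : IsUnit Dμ.det := by
    rw [hDμ, Matrix.det_mul, Matrix.det_nonsing_inv]
    exact hdetΛ.mul (isUnit_ringInverse.mpr hdet1)
  -- inverses
  have key : ∀ P Q : Matrix (Fin n) (Fin n) ℝ,
      (W * P * Wᵀ) * (W * Q * Wᵀ) = W * (P * Q) * Wᵀ := by
    intro P Q
    simp only [← mul_assoc]
    rw [mul_assoc (W * P) Wᵀ W, hW1, mul_one, mul_assoc W P Q]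
  have hinvA1 : (A - 1)⁻¹ = W * (Λ - 1)⁻¹ * Wᵀ := by
    apply Matrix.inv_eq_right_inv
    rw [hA1eq, key, Matrix.mul_nonsing_inv _ hdet1, mul_one, hW2]
  have hDμinv : Dμ⁻¹ = (Λ - 1) * Λ⁻¹ := by
    apply Matrix.inv_eq_right_inv
    rw [hDμ, mul_assoc, ← mul_assoc (Λ - 1)⁻¹, Matrix.nonsing_inv_mul _ hdet1, one_mul,
      Matrix.mul_nonsing_inv _ hdetΛ]
  -- cancellation helpers (right-associated)
  have l1 : ∀ X : Matrix (Fin n) (Fin n) ℝ, Wᵀ * (W * X) = X := by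
    intro X; rw [← mul_assoc, hW1, one_mul]
  have l2 : ∀ X : Matrix (Fin n) (Fin n) ℝ, W * (Wᵀ * X) = X := by
    intro X; rw [← mul_assoc, hW2, one_mul]
  have l3 : ∀ X : Matrix (Fin n) (Fin n) ℝ, Dμ * (Dμ⁻¹ * X) = X := by
    intro X; rw [← mul_assoc, Matrix.mul_nonsing_inv _ hdetDμ, one_mul]
  have l4 : ∀ X : Matrix (Fin n) (Fin n) ℝ, W * (Dμ * (Wᵀ * X)) = A * ((A - 1)⁻¹ * X) := by
    intro X
    rw [hDμ, hinvA1, hA]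
    simp only [mul_assoc]
    rw [l1]
  have l5 : W * (Dμ⁻¹ * (Wᵀ * A)) = A - 1 := by
    rw [hWA, hDμinv, mul_assoc (Λ - 1), ← mul_assoc Λ⁻¹, Matrix.nonsing_inv_mul _ hdetΛ,
      one_mul, ← mul_assoc, ← hA1eq]
  -- error propagation
  have hb : A.mulVec xstar = xstar - b := by
    rw [eq_sub_iff_add_eq, ← hfix]
  have he : ∀ j, j ≤ k → x j - xstar = (A ^ j).mulVec (x 0 - xstar) := by
    intro j
    induction j with
    | zero => simp
    | succ j ih =>
      intro hj
      have hjk : j < k := Nat.lt_of_succ_le hj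
      rw [hx j hjk, pow_succ', ← Matrix.mulVec_mulVec, ← ih (le_of_lt hjk),
        Matrix.mulVec_sub, hb]
      abel
  have hfe : ∀ j, f j = (A - 1).mulVec (x j - xstar) := by
    intro j
    rw [hf j, Matrix.sub_mulVec, Matrix.one_mulVec, Matrix.mulVec_sub, hb]
    abel
  -- Krylov matrix
  set v : Fin n → ℝ := x 0 - xstar with hv
  set Kmat : Matrix (Fin n) (Fin m) ℝ :=
    Matrix.of (fun i (l : Fin m) => (A ^ (l : ℕ)).mulVec v i) with hKmat
  have hmulK : ∀ (M : Matrix (Fin n) (Fin n) ℝ) (i : Fin n) (l : Fin m),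
      (M * Kmat) i l = ((M * A ^ (l : ℕ)).mulVec v) i := by
    intro M i l
    simp only [Matrix.mul_apply, Matrix.mulVec, dotProduct, hKmat, Matrix.of_apply,
      Finset.mul_sum, Finset.sum_mul]
    rw [Finset.sum_comm]
    apply Finset.sum_congr rfl
    intro j _
    apply Finset.sum_congr rfl
    intro t _
    ring
  have hbound : ∀ l : Fin m, k - m + (l : ℕ) + 1 ≤ k := by
    intro l; have := l.isLt; omega
  have hDkmat : Dk = (A - 1) ^ 2 * A ^ (k - m) * Kmat := by
    rw [hDk]
    ext i l
    rw [Matrix.of_apply, hmulK]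
    rw [hfe, hfe, he _ (hbound l), he _ (le_trans (Nat.le_succ _) (hbound l)),
      Matrix.mulVec_mulVec, Matrix.mulVec_mulVec]
    have hmat : (A - 1) * A ^ (k - m + (l : ℕ) + 1) - (A - 1) * A ^ (k - m + (l : ℕ))
        = (A - 1) ^ 2 * A ^ (k - m) * A ^ (l : ℕ) := by
      rw [mul_assoc ((A - 1) ^ 2), ← pow_add, pow_succ']
      noncomm_ring
    rw [← hmat, Matrix.sub_mulVec]
    simp
  have hXkmat : Xk = (A - 1) * A ^ (k - m) * Kmat := by
    rw [hXk]
    ext i l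
    rw [Matrix.of_apply, hmulK]
    have h1 : x (k - m + (l : ℕ) + 1) i - x (k - m + (l : ℕ)) i
        = (x (k - m + (l : ℕ) + 1) - xstar) i - (x (k - m + (l : ℕ)) - xstar) i := by
      simp
    rw [h1, he _ (hbound l), he _ (le_trans (Nat.le_succ _) (hbound l))]
    have hmat : A ^ (k - m + (l : ℕ) + 1) - A ^ (k - m + (l : ℕ))
        = (A - 1) * A ^ (k - m) * A ^ (l : ℕ) := by
      rw [mul_assoc (A - 1), ← pow_add, pow_succ']
      noncomm_ring
    rw [← hmat, Matrix.sub_mulVec]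
    simp
  -- Dk + Xk = A (A-1)⁻¹ Dk
  have h2 : (A - 1)⁻¹ * ((A - 1) ^ 2 * A ^ (k - m)) = (A - 1) * A ^ (k - m) := by
    rw [sq, ← mul_assoc, ← mul_assoc, Matrix.nonsing_inv_mul _ hdetA1, one_mul]
  have hDX : Dk + Xk = A * (A - 1)⁻¹ * Dk := by
    rw [hDkmat, hXkmat,
      ← Matrix.mul_assoc (A * (A - 1)⁻¹) ((A - 1) ^ 2 * A ^ (k - m)) Kmat,
      mul_assoc A ((A - 1)⁻¹) ((A - 1) ^ 2 * A ^ (k - m)), h2, ← Matrix.add_mul]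
    congr 1
    noncomm_ring
  -- KH = Wᵀ Dk
  have hcomm : ∀ p q : ℕ, Λ ^ p * ((Λ - 1) ^ q) = (Λ - 1) ^ q * Λ ^ p := by
    intro p q
    exact (((Commute.refl Λ).sub_right (Commute.one_right Λ)).pow_pow p q).eq
  have hc : ∀ j : ℕ, Λ ^ j * H * Wᵀ = Wᵀ * ((A - 1) ^ 2 * A ^ (k - m)) * A ^ j := by
    intro j
    have e2 : Wᵀ * ((A - 1) ^ 2 * A ^ (k - m)) * A ^ j
        = (Λ - 1) ^ 2 * Λ ^ (k - m + j) * Wᵀ := by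
      rw [mul_assoc Wᵀ ((A - 1) ^ 2 * A ^ (k - m)) (A ^ j),
        mul_assoc ((A - 1) ^ 2) (A ^ (k - m)) (A ^ j), ← pow_add,
        ← mul_assoc Wᵀ ((A - 1) ^ 2) (A ^ (k - m + j)), hWB2,
        mul_assoc ((Λ - 1) ^ 2) Wᵀ (A ^ (k - m + j)), hWpow, ← mul_assoc]
    have e1 : Λ ^ j * ((Λ - 1) ^ 2 * Λ ^ (k - m)) = (Λ - 1) ^ 2 * Λ ^ (k - m + j) := by
      rw [← mul_assoc, hcomm j 2, mul_assoc, ← pow_add, Nat.add_comm j (k - m)]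
    rw [hH, e2, e1]
  have hKHW : KH = Wᵀ * Dk := by
    rw [hKH, hDkmat, ← Matrix.mul_assoc Wᵀ ((A - 1) ^ 2 * A ^ (k - m)) Kmat]
    ext i j
    rw [Matrix.of_apply, Matrix.mulVec_mulVec, Matrix.mulVec_mulVec, hc, hmulK]
  have hKHt : (Wᵀ * Dk)ᵀ * (Wᵀ * Dk) = Dkᵀ * Dk := by
    rw [Matrix.transpose_mul, Matrix.transpose_transpose, Matrix.mul_assoc Dkᵀ,
      ← Matrix.mul_assoc W Wᵀ Dk, hW2, Matrix.one_mul]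
  -- final matrix identity
  have hSk' : Sk = A * ((A - 1)⁻¹ * (Dk * ((Dkᵀ * Dk)⁻¹ * Dkᵀ))) := by
    rw [hSk, hDX]
    simp only [Matrix.mul_assoc]
  have Mfull : W * E * Wᵀ * A = 1 + (1 - Sk) * (A - 1) := by
    rw [hE, hKHW, hKHt, hSk']
    simp only [Matrix.transpose_mul, Matrix.transpose_transpose]
    simp only [Matrix.mul_sub, Matrix.sub_mul, Matrix.mul_one, Matrix.one_mul,
      Matrix.mul_assoc]
    simp only [l1, l2, l3, l4, l5]
    simp only [Matrix.mul_sub, Matrix.sub_mul, Matrix.mul_one, Matrix.one_mul,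
      Matrix.mul_assoc]
    abel
  rw [hxk1, hfe k, Mfull, Matrix.add_mulVec, Matrix.one_mulVec, ← Matrix.mulVec_mulVec]
  abel
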